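/- For any ultradiscrete ballean (X,𝓔) we have add(B_X) < cof(B_X), where add(B_X) is the smallest cardinality of a family of bounded subsets of X having no bounded upper bound under inclusion and cof(B_X) is the smallest cardinality of a subfamily C of the bornology such that every bounded set is contained in some member of C. In particular, the bornology of an ultradiscrete ballean does not have a linearly ordered base. -/

import Mathlib

universe u v

open Set

/-- A ballean: a set `X` with a family of entourages satisfying the three axioms. -/
structure Ballean (X : Type u) : Type u where
  entourages : Set (Set (X × X))
  diag_mem : ∀ E ∈ entourages, ∀ x : X, (x, x) ∈ E
  comp_inv_sub : ∀ E ∈ entourages, ∀ F ∈ entourages, ∃ D ∈ entourages,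
      {p : X × X | ∃ y : X, (p.1, y) ∈ E ∧ (p.2, y) ∈ F} ⊆ D
  sUnion_eq_univ : ⋃₀ entourages = Set.univ

namespace Ballean

variable {X : Type u}

/-- The ball `E[x]` of radius `E` centered at `x`. -/
def ball (E : Set (X × X)) (x : X) : Set X := {y | (x, y) ∈ E}

/-- The `E`-neighborhood `E[A]` of a set `A`. -/
def img (E : Set (X × X)) (A : Set X) : Set X := {y | ∃ a ∈ A, (a, y) ∈ E}

/-- A subset is bounded if it is contained in some ball. -/
def IsBounded (B : Ballean X) (S : Set X) : Prop :=
  ∃ E ∈ B.entourages, ∃ x : X, S ⊆ ball E x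

def Unbounded (B : Ballean X) : Prop := ¬ B.IsBounded Set.univ

/-- Two sets are asymptotically disjoint if `E[A] ∩ E[C]` is bounded for all entourages. -/
def AsympDisjoint (B : Ballean X) (A C : Set X) : Prop :=
  ∀ E ∈ B.entourages, B.IsBounded (img E A ∩ img E C)

/-- `U` is an asymptotic neighborhood of `A` if `E[A] \ U` is bounded for all entourages. -/
def AsympNbhd (B : Ballean X) (A U : Set X) : Prop :=
  ∀ E ∈ B.entourages, B.IsBounded (img E A \ U)

/-- A ballean is normal if asymptotically disjoint sets have disjoint asymptotic
neighborhoods. -/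
def Normal (B : Ballean X) : Prop :=
  ∀ A C : Set X, B.AsympDisjoint A C →
    ∃ U V : Set X, B.AsympNbhd A U ∧ B.AsympNbhd C V ∧ Disjoint U V

/-- A ballean is ultranormal if it contains no two unbounded asymptotically disjoint sets. -/
def Ultranormal (B : Ballean X) : Prop :=
  ∀ A C : Set X, B.AsympDisjoint A C → B.IsBounded A ∨ B.IsBounded C

/-- A ballean is discrete if it is unbounded and every entourage acts trivially
outside a bounded set. -/
def Discrete (B : Ballean X) : Prop :=
  B.Unbounded ∧ ∀ E ∈ B.entourages, ∃ S : Set X, B.IsBounded S ∧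
    ∀ x ∉ S, ball E x = {x}

/-- A ballean has bounded growth if there is a growth entourage `G`. -/
def BoundedGrowth (B : Ballean X) : Prop :=
  ∃ G : Set (X × X),
    (∀ S : Set X, B.IsBounded S → B.IsBounded (img G S)) ∧
    (∀ E ∈ B.entourages, ∃ S : Set X, B.IsBounded S ∧ ∀ x ∉ S, ball E x ⊆ ball G x)

/-- The bornology of a ballean has a linearly ordered base. -/
def HasLinearBornBase (B : Ballean X) : Prop :=
  ∃ 𝒞 : Set (Set X), (∀ C ∈ 𝒞, B.IsBounded C) ∧
    (∀ C ∈ 𝒞, ∀ D ∈ 𝒞, C ⊆ D ∨ D ⊆ C) ∧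
    ∀ S : Set X, B.IsBounded S → ∃ C ∈ 𝒞, S ⊆ C

/-- The additivity of the bornology: the smallest cardinality of a family of bounded
sets with no bounded upper bound. -/
noncomputable def addBorn (B : Ballean X) : Cardinal.{u} :=
  sInf {c | ∃ 𝒜 : Set (Set X), (∀ A ∈ 𝒜, B.IsBounded A) ∧
    (¬ ∃ D : Set X, B.IsBounded D ∧ ∀ A ∈ 𝒜, A ⊆ D) ∧ c = Cardinal.mk ↥𝒜}

/-- The cofinality of the bornology: the smallest cardinality of a base of the bornology. -/
noncomputable def cofBorn (B : Ballean X) : Cardinal.{u} :=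
  sInf {c | ∃ 𝒞 : Set (Set X), (∀ C ∈ 𝒞, B.IsBounded C) ∧
    (∀ S : Set X, B.IsBounded S → ∃ C ∈ 𝒞, S ⊆ C) ∧ c = Cardinal.mk ↥𝒞}

/-- The cofinality of the family of entourages. -/
noncomputable def cofEnt (B : Ballean X) : Cardinal.{u} :=
  sInf {c | ∃ 𝒞 : Set (Set (X × X)), 𝒞 ⊆ B.entourages ∧
    (∀ E ∈ B.entourages, ∃ C ∈ 𝒞, E ⊆ C) ∧ c = Cardinal.mk ↥𝒞}

/-- A ballean is `cof`-regular if `cof(𝓔) = cof(B_X)`. -/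
def CofRegular (B : Ballean X) : Prop := B.cofEnt = B.cofBorn

end Ballean

/-- The entourages of the product of two balleans. -/
def prodEnt {X Y : Type u} (BX : Ballean X) (BY : Ballean Y) :
    Set (Set ((X × Y) × (X × Y))) :=
  {E | ∃ EX ∈ BX.entourages, ∃ EY ∈ BY.entourages,
    E = {p | (p.1.1, p.2.1) ∈ EX ∧ (p.1.2, p.2.2) ∈ EY}}

/-- The entourages of the box-product of a family of balleans. -/
def boxEnt {I : Type v} {X : I → Type u} (B : ∀ i, Ballean (X i)) :
    Set (Set ((∀ i, X i) × (∀ i, X i))) :=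
  {E | ∃ F : ∀ i, Set (X i × X i), (∀ i, F i ∈ (B i).entourages) ∧
    E = {p | ∀ i, (p.1 i, p.2 i) ∈ F i}}

/-- The entourages of the `n`-th power of a ballean. -/
def powEnt {X : Type u} (B : Ballean X) (n : ℕ) :
    Set (Set ((Fin n → X) × (Fin n → X))) :=
  {E | ∃ F : Fin n → Set (X × X), (∀ i, F i ∈ B.entourages) ∧
    E = {p | ∀ i, (p.1 i, p.2 i) ∈ F i}}


/-! ### Auxiliary lemmas for statement 18 -/

namespace Ballean

variable {X : Type u} (B : Ballean X)

lemma isBounded_mono {S T : Set X} (h : S ⊆ T) (hT : B.IsBounded T) : B.IsBounded S := by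
  obtain ⟨E, hE, x, hx⟩ := hT
  exact ⟨E, hE, x, h.trans hx⟩

lemma exists_inv_sub {F : Set (X × X)} (hF : F ∈ B.entourages) :
    ∃ D ∈ B.entourages, ∀ a b : X, (a, b) ∈ F → (b, a) ∈ D := by
  obtain ⟨D, hD, hsub⟩ := B.comp_inv_sub F hF F hF
  exact ⟨D, hD, fun a b hab => hsub ⟨b, B.diag_mem F hF b, hab⟩⟩

lemma exists_comp {E F : Set (X × X)} (hE : E ∈ B.entourages) (hF : F ∈ B.entourages) :
    ∃ D ∈ B.entourages, ∀ a b c : X, (a, b) ∈ E → (b, c) ∈ F → (a, c) ∈ D := by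
  obtain ⟨D₁, hD₁, h1⟩ := B.exists_inv_sub hF
  obtain ⟨D, hD, hsub⟩ := B.comp_inv_sub E hE D₁ hD₁
  exact ⟨D, hD, fun a b c hab hbc => hsub ⟨b, hab, h1 b c hbc⟩⟩

lemma exists_sup {E F : Set (X × X)} (hE : E ∈ B.entourages) (hF : F ∈ B.entourages) :
    ∃ D ∈ B.entourages, E ⊆ D ∧ F ⊆ D := by
  obtain ⟨D₁, hD₁, h1⟩ := B.exists_inv_sub hF
  obtain ⟨D, hD, hsub⟩ := B.comp_inv_sub E hE D₁ hD₁
  refine ⟨D, hD, fun p hp => hsub ⟨p.2, hp, B.diag_mem _ hD₁ p.2⟩,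
    fun p hp => hsub ⟨p.1, B.diag_mem _ hE p.1, h1 p.1 p.2 hp⟩⟩

lemma isBounded_union {S T : Set X} (hS : B.IsBounded S) (hT : B.IsBounded T) :
    B.IsBounded (S ∪ T) := by
  obtain ⟨E, hE, x, hx⟩ := hS
  obtain ⟨F, hF, y, hy⟩ := hT
  have hxy : ((x, y) : X × X) ∈ ⋃₀ B.entourages := by rw [B.sUnion_eq_univ]; trivial
  obtain ⟨G, hG, hxyG⟩ := hxy
  obtain ⟨D₂, hD₂, hcomp⟩ := B.exists_comp hG hF
  obtain ⟨D, hD, hED, hD₂D⟩ := B.exists_sup hE hD₂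
  refine ⟨D, hD, x, fun z hz => ?_⟩
  rcases hz with hz | hz
  · exact hED (hx hz)
  · exact hD₂D (hcomp x y z hxyG (hy hz))

lemma isBounded_img {E : Set (X × X)} (hE : E ∈ B.entourages) {S : Set X}
    (hS : B.IsBounded S) : B.IsBounded (img E S) := by
  obtain ⟨F, hF, x, hx⟩ := hS
  obtain ⟨D, hD, hcomp⟩ := B.exists_comp hF hE
  refine ⟨D, hD, x, fun z hz => ?_⟩
  obtain ⟨a, ha, haz⟩ := hz
  exact hcomp x a z (hx ha) haz

lemma isBounded_insert {S : Set X} (hS : B.IsBounded S) (a : X) :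
    B.IsBounded (insert a S) := by
  obtain ⟨E, hE, x, hx⟩ := id hS
  have h1 : B.IsBounded {a} := by
    refine ⟨E, hE, a, fun z hz => ?_⟩
    rw [mem_singleton_iff] at hz
    rw [hz]
    exact B.diag_mem E hE a
  have h2 := B.isBounded_union h1 hS
  rwa [singleton_union] at h2

lemma exists_not_mem (hX : ¬ B.IsBounded univ) {S : Set X} (hS : B.IsBounded S) :
    ∃ x, x ∉ S := by
  by_contra h
  push_neg at h
  exact hX (B.isBounded_mono (fun x _ => h x) hS)

lemma exists_pair_not_mem (hX : ¬ B.IsBounded univ) {S : Set X} (hS : B.IsBounded S) :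
    ∃ x y : X, x ≠ y ∧ x ∉ S ∧ y ∉ S := by
  obtain ⟨x, hx⟩ := B.exists_not_mem hX hS
  obtain ⟨y, hy⟩ := B.exists_not_mem hX (B.isBounded_insert hS x)
  refine ⟨x, y, fun h => hy ?_, hx, fun h => hy (mem_insert_iff.mpr (Or.inr h))⟩
  rw [← h]
  exact mem_insert x S

lemma isBounded_empty (hdis : B.Discrete) (hun : B.Ultranormal) : B.IsBounded (∅ : Set X) := by
  by_cases hX : Nonempty X
  · obtain ⟨x⟩ := hX
    have hx : ((x, x) : X × X) ∈ ⋃₀ B.entourages := by rw [B.sUnion_eq_univ]; trivial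
    obtain ⟨E, hE, -⟩ := hx
    exact ⟨E, hE, x, by simp⟩
  · exfalso
    by_cases hent : ∃ E, E ∈ B.entourages
    · obtain ⟨E, hE⟩ := hent
      obtain ⟨S, hS, -⟩ := hdis.2 E hE
      obtain ⟨F, hF, x, -⟩ := hS
      exact hX ⟨x⟩
    · have h := hun ∅ ∅ (fun E hE => absurd ⟨E, hE⟩ hent)
      rcases h with h | h <;> · obtain ⟨E, hE, x, -⟩ := h; exact hX ⟨x⟩

lemma bounded_of_inter_bounded (hdis : B.Discrete) (hun : B.Ultranormal)
    {Y₀ Y₁ : Set X} (h : B.IsBounded (Y₀ ∩ Y₁)) :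
    B.IsBounded Y₀ ∨ B.IsBounded Y₁ := by
  apply hun
  intro E hE
  obtain ⟨S, hS, hball⟩ := hdis.2 E hE
  have himg : ∀ Y : Set X, img E Y ⊆ Y ∪ img E S := by
    intro Y z hz
    obtain ⟨a, ha, haz⟩ := hz
    by_cases haS : a ∈ S
    · exact Or.inr ⟨a, haS, haz⟩
    · have hz' : z ∈ ball E a := haz
      rw [hball a haS, mem_singleton_iff] at hz'
      subst hz'
      exact Or.inl ha
  have hsub : img E Y₀ ∩ img E Y₁ ⊆ (Y₀ ∩ Y₁) ∪ img E S := by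
    rintro z ⟨h0, h1⟩
    rcases himg Y₀ h0 with h0' | h0'
    · rcases himg Y₁ h1 with h1' | h1'
      · exact Or.inl ⟨h0', h1'⟩
      · exact Or.inr h1'
    · exact Or.inr h0'
  exact B.isBounded_mono hsub (B.isBounded_union h (B.isBounded_img hE hS))

lemma isBounded_sUnion_finite (hemp : B.IsBounded (∅ : Set X)) {𝒜 : Set (Set X)}
    (hfin : 𝒜.Finite) (hb : ∀ A ∈ 𝒜, B.IsBounded A) : B.IsBounded (⋃₀ 𝒜) := by
  refine Set.Finite.induction_on
    (motive := fun s _ => (∀ A ∈ s, B.IsBounded A) → B.IsBounded (⋃₀ s)) _ hfin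
    (fun _ => by simpa using hemp) ?_ hb
  intro a s _ _ ih hball
  rw [sUnion_insert]
  exact B.isBounded_union (hball a (mem_insert a s))
    (ih fun T hT => hball T (mem_insert_iff.mpr (Or.inr hT)))

end Ballean

section Chain

attribute [local instance] Classical.propDecidable

variable {X : Type u} (B : Ballean X) (x₀ : X)

/-- Pick a pair of distinct points outside `S` (when possible). -/
noncomputable def pickPair (S : Set X) : X × X :=
  if h : ∃ p : X × X, p.1 ≠ p.2 ∧ p.1 ∉ S ∧ p.2 ∉ S then h.choose else (x₀, x₀)

lemma pickPair_spec {S : Set X}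
    (h : ∃ p : X × X, p.1 ≠ p.2 ∧ p.1 ∉ S ∧ p.2 ∉ S) :
    (pickPair x₀ S).1 ≠ (pickPair x₀ S).2 ∧
      (pickPair x₀ S).1 ∉ S ∧ (pickPair x₀ S).2 ∉ S := by
  rw [pickPair, dif_pos h]
  exact h.choose_spec

/-- Pick a bounded upper bound of a family (when possible). -/
noncomputable def ubSet (𝒜 : Set (Set X)) : Set X :=
  if h : ∃ D, B.IsBounded D ∧ ∀ A ∈ 𝒜, A ⊆ D then h.choose else ∅

lemma ubSet_spec {𝒜 : Set (Set X)} (h : ∃ D, B.IsBounded D ∧ ∀ A ∈ 𝒜, A ⊆ D) :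
    B.IsBounded (ubSet B 𝒜) ∧ ∀ A ∈ 𝒜, A ⊆ ubSet B 𝒜 := by
  rw [ubSet, dif_pos h]
  exact h.choose_spec

variable {κ : Cardinal.{u}} (C : κ.ord.ToType → Set X)

/-- The transfinite chain of bounded sets. -/
noncomputable def chainD : κ.ord.ToType → Set X :=
  (IsWellFounded.wf (r := ((· < ·) : κ.ord.ToType → κ.ord.ToType → Prop))).fix
    (fun i rec => ubSet B (C '' Iic i ∪
      range (fun j : Iio i => rec j j.2 ∪
        {(pickPair x₀ (rec j j.2)).1, (pickPair x₀ (rec j j.2)).2})))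

/-- The family fed to `ubSet` at stage `i`. -/
noncomputable def chainFam (i : κ.ord.ToType) : Set (Set X) :=
  C '' Iic i ∪ range (fun j : Iio i => chainD B x₀ C j ∪
    {(pickPair x₀ (chainD B x₀ C j)).1, (pickPair x₀ (chainD B x₀ C j)).2})

lemma chainD_eq (i : κ.ord.ToType) : chainD B x₀ C i = ubSet B (chainFam B x₀ C i) :=
  WellFounded.fix_eq _ _ i

include x₀ in
lemma ballean_no_small_cofinal (hdis : B.Discrete) (hun : B.Ultranormal)
    (hκ : Cardinal.aleph0 ≤ κ)
    (hCb : ∀ i, B.IsBounded (C i))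
    (hCcof : ∀ S : Set X, B.IsBounded S → ∃ i, S ⊆ C i)
    (H : ∀ 𝒜 : Set (Set X), (∀ A ∈ 𝒜, B.IsBounded A) → Cardinal.mk ↥𝒜 < κ →
      ∃ D, B.IsBounded D ∧ ∀ A ∈ 𝒜, A ⊆ D) : False := by
  classical
  have hemp : B.IsBounded (∅ : Set X) := B.isBounded_empty hdis hun
  have hXu : ¬ B.IsBounded univ := hdis.1
  set D : κ.ord.ToType → Set X := chainD B x₀ C with hD
  have hmain : ∀ i, B.IsBounded (D i) ∧ ∀ A ∈ chainFam B x₀ C i, A ⊆ D i := by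
    have hwf := IsWellFounded.wf (α := κ.ord.ToType) (r := (· < ·))
    intro i
    refine hwf.induction
      (C := fun i => B.IsBounded (D i) ∧ ∀ A ∈ chainFam B x₀ C i, A ⊆ D i) i
      (fun i IH => ?_)
    have hbdd : ∀ A ∈ chainFam B x₀ C i, B.IsBounded A := by
      rintro A (⟨j, hj, rfl⟩ | ⟨j, rfl⟩)
      · exact hCb j
      · have h1 := (IH j j.2).1
        have h2 := B.isBounded_insert (B.isBounded_insert h1
          (pickPair x₀ (chainD B x₀ C j)).2) (pickPair x₀ (chainD B x₀ C j)).1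
        refine B.isBounded_mono ?_ h2
        intro z hz
        rcases hz with hz | hz
        · exact Or.inr (Or.inr hz)
        · rcases hz with hz | hz
          · exact Or.inl hz
          · exact Or.inr (Or.inl hz)
    have hIic : Cardinal.mk ↥(Iic i) < κ := by
      have h1 : Cardinal.mk ↥(Iic i) ≤ Cardinal.mk ↥(Iio i) + 1 := by
        rw [← Set.Iio_union_right]
        exact (Cardinal.mk_union_le _ _).trans (by rw [Cardinal.mk_singleton])
      exact h1.trans_lt (Cardinal.add_lt_of_lt hκ (Cardinal.mk_Iio_ord_toType i)
        (lt_of_lt_of_le Cardinal.one_lt_aleph0 hκ))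
    have hcard : Cardinal.mk ↥(chainFam B x₀ C i) < κ := by
      refine (Cardinal.mk_union_le _ _).trans_lt (Cardinal.add_lt_of_lt hκ ?_ ?_)
      · exact Cardinal.mk_image_le.trans_lt hIic
      · exact Cardinal.mk_range_le.trans_lt (Cardinal.mk_Iio_ord_toType i)
    have hex := H (chainFam B x₀ C i) hbdd hcard
    have hspec := ubSet_spec B hex
    rw [← chainD_eq] at hspec
    exact hspec
  have hpick : ∀ i, (pickPair x₀ (D i)).1 ≠ (pickPair x₀ (D i)).2 ∧
      (pickPair x₀ (D i)).1 ∉ D i ∧ (pickPair x₀ (D i)).2 ∉ D i := by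
    intro i
    obtain ⟨x, y, hne, hx, hy⟩ := B.exists_pair_not_mem hXu (hmain i).1
    exact pickPair_spec x₀ ⟨(x, y), hne, hx, hy⟩
  set xi : κ.ord.ToType → X := fun i => (pickPair x₀ (D i)).1 with hxi
  set yi : κ.ord.ToType → X := fun i => (pickPair x₀ (D i)).2 with hyi
  have hDmono : ∀ j i : κ.ord.ToType, j < i → D j ∪ {xi j, yi j} ⊆ D i := by
    intro j i hji
    exact (hmain i).2 _ (Or.inr ⟨⟨j, hji⟩, rfl⟩)
  have hCsub : ∀ j i : κ.ord.ToType, j ≤ i → C j ⊆ D i := by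
    intro j i hji
    exact (hmain i).2 _ (Or.inl ⟨j, hji, rfl⟩)
  have hxmem : ∀ j i : κ.ord.ToType, j < i → xi j ∈ D i :=
    fun j i hji => hDmono j i hji (Or.inr (Or.inl rfl))
  have hymem : ∀ j i : κ.ord.ToType, j < i → yi j ∈ D i :=
    fun j i hji => hDmono j i hji (Or.inr (Or.inr rfl))
  have hinter : range xi ∩ range yi ⊆ (∅ : Set X) := by
    rintro z ⟨⟨i, rfl⟩, ⟨j, hj⟩⟩
    rcases lt_trichotomy i j with hij | hij | hij
    · have hm := hxmem i j hij
      rw [← hj] at hm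
      exact (hpick j).2.2 hm
    · subst hij
      exact (hpick i).1 hj.symm
    · have hm := hymem j i hij
      rw [hj] at hm
      exact (hpick i).2.1 hm
  have hY0 : ¬ B.IsBounded (range xi) := by
    intro h
    obtain ⟨j, hsub⟩ := hCcof _ h
    exact (hpick j).2.1 (hCsub j j le_rfl (hsub (mem_range_self j)))
  have hY1 : ¬ B.IsBounded (range yi) := by
    intro h
    obtain ⟨j, hsub⟩ := hCcof _ h
    exact (hpick j).2.2 (hCsub j j le_rfl (hsub (mem_range_self j)))
  rcases B.bounded_of_inter_bounded hdis hun (B.isBounded_mono hinter hemp) with h | h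
  · exact hY0 h
  · exact hY1 h

end Chain

/-- STATEMENT 18: for any ultradiscrete (i.e. discrete and ultranormal) ballean,
`add(B_X) < cof(B_X)`; in particular its bornology has no linearly ordered base. -/
theorem statement18 {X : Type u} (B : Ballean X)
    (hdis : B.Discrete) (hun : B.Ultranormal) :
    B.addBorn < B.cofBorn ∧ ¬ B.HasLinearBornBase := by
  classical
  have hemp : B.IsBounded (∅ : Set X) := B.isBounded_empty hdis hun
  have hXu : ¬ B.IsBounded univ := hdis.1
  have hnoub : ∀ 𝒞 : Set (Set X), (∀ S : Set X, B.IsBounded S → ∃ C ∈ 𝒞, S ⊆ C) →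
      ¬ ∃ D : Set X, B.IsBounded D ∧ ∀ A ∈ 𝒞, A ⊆ D := by
    rintro 𝒞 hcof ⟨D, hD, hub⟩
    obtain ⟨x, hx⟩ := B.exists_not_mem hXu hD
    obtain ⟨C, hC, hsub⟩ := hcof (insert x D) (B.isBounded_insert hD x)
    exact hx (hub C hC (hsub (mem_insert x D)))
  set addset : Set Cardinal.{u} := {c | ∃ 𝒜 : Set (Set X), (∀ A ∈ 𝒜, B.IsBounded A) ∧
    (¬ ∃ D : Set X, B.IsBounded D ∧ ∀ A ∈ 𝒜, A ⊆ D) ∧ c = Cardinal.mk ↥𝒜} with haddset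
  set cofset : Set Cardinal.{u} := {c | ∃ 𝒞 : Set (Set X), (∀ C ∈ 𝒞, B.IsBounded C) ∧
    (∀ S : Set X, B.IsBounded S → ∃ C ∈ 𝒞, S ⊆ C) ∧ c = Cardinal.mk ↥𝒞} with hcofset
  have haddBorn : B.addBorn = sInf addset := rfl
  have hcofBorn : B.cofBorn = sInf cofset := rfl
  have hallcof : ∀ S : Set X, B.IsBounded S → ∃ C ∈ {A : Set X | B.IsBounded A}, S ⊆ C :=
    fun S hS => ⟨S, hS, subset_rfl⟩
  have haddne : addset.Nonempty :=
    ⟨_, {A : Set X | B.IsBounded A}, fun A hA => hA, hnoub _ hallcof, rfl⟩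
  have hcofne : cofset.Nonempty :=
    ⟨_, {A : Set X | B.IsBounded A}, fun A hA => hA, hallcof, rfl⟩
  obtain ⟨𝒜₀, h𝒜b, h𝒜nub, h𝒜card⟩ := csInf_mem haddne
  obtain ⟨𝒞₀, h𝒞b, h𝒞cof, h𝒞card⟩ := csInf_mem hcofne
  have hle : B.addBorn ≤ B.cofBorn := by
    rw [haddBorn, hcofBorn, h𝒞card]
    exact csInf_le (OrderBot.bddBelow _) ⟨𝒞₀, h𝒞b, hnoub 𝒞₀ h𝒞cof, rfl⟩
  have hlt : B.addBorn < B.cofBorn := by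
    rcases lt_or_ge B.addBorn B.cofBorn with h | hge
    · exact h
    exfalso
    have heq : B.addBorn = B.cofBorn := le_antisymm hle hge
    have H : ∀ 𝒜 : Set (Set X), (∀ A ∈ 𝒜, B.IsBounded A) → Cardinal.mk ↥𝒜 < B.cofBorn →
        ∃ D, B.IsBounded D ∧ ∀ A ∈ 𝒜, A ⊆ D := by
      intro 𝒜 hb hcard
      by_contra hno
      have hmem : Cardinal.mk ↥𝒜 ∈ addset := ⟨𝒜, hb, hno, rfl⟩
      have := csInf_le (OrderBot.bddBelow _) hmem
      rw [← haddBorn, heq] at this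
      exact absurd hcard (not_lt.mpr this)
    have hκ : Cardinal.aleph0 ≤ B.cofBorn := by
      rw [← heq, haddBorn, h𝒜card]
      by_contra hfin
      push_neg at hfin
      have hfin' : 𝒜₀.Finite := by
        have := Cardinal.mk_lt_aleph0_iff.mp hfin
        exact Set.finite_coe_iff.mp this
      exact h𝒜nub ⟨⋃₀ 𝒜₀, B.isBounded_sUnion_finite hemp hfin' h𝒜b,
        fun A hA => subset_sUnion_of_mem hA⟩
    obtain ⟨x₀⟩ : Nonempty X := by
      obtain ⟨E, hE, x, -⟩ := hemp
      exact ⟨x⟩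
    have hmkeq : Cardinal.mk (B.cofBorn).ord.ToType = Cardinal.mk ↥𝒞₀ := by
      rw [Cardinal.mk_ord_toType, hcofBorn, h𝒞card]
    obtain ⟨e⟩ := Cardinal.eq.mp hmkeq
    refine ballean_no_small_cofinal B x₀ (fun i => ((e i : ↥𝒞₀) : Set X)) hdis hun hκ
      (fun i => h𝒞b _ (e i).2) ?_ H
    intro S hS
    obtain ⟨C, hC, hsub⟩ := h𝒞cof S hS
    refine ⟨e.symm ⟨C, hC⟩, ?_⟩
    simpa only [Equiv.apply_symm_apply] using hsub
  refine ⟨hlt, ?_⟩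
  rintro ⟨𝒞, h1, h2, h3⟩
  have hge : B.cofBorn ≤ B.addBorn := by
    rw [haddBorn]
    apply le_csInf haddne
    rintro c ⟨𝒜, hb, hnub, rfl⟩
    by_contra hlt'
    push_neg at hlt'
    apply hnub
    have hchoice : ∀ A : ↥𝒜, ∃ C, C ∈ 𝒞 ∧ (A : Set X) ⊆ C := by
      intro A
      obtain ⟨C, hC, hsub⟩ := h3 A (hb A A.2)
      exact ⟨C, hC, hsub⟩
    choose f hf1 hf2 using hchoice
    by_cases hcase : ∃ D ∈ 𝒞, ∀ A : ↥𝒜, f A ⊆ D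
    · obtain ⟨D, hD, hDub⟩ := hcase
      exact ⟨D, h1 D hD, fun A hA => ((hf2 ⟨A, hA⟩).trans (hDub ⟨A, hA⟩))⟩
    · exfalso
      push_neg at hcase
      have hcof' : ∀ S : Set X, B.IsBounded S → ∃ C ∈ range f, S ⊆ C := by
        intro S hS
        obtain ⟨D, hD, hsub⟩ := h3 S hS
        obtain ⟨A, hA⟩ := hcase D hD
        have hDC : D ⊆ f A := (h2 (f A) (hf1 A) D hD).resolve_left hA
        exact ⟨f A, mem_range_self A, hsub.trans hDC⟩
      have hbd : ∀ C ∈ range f, B.IsBounded C := by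
        rintro C ⟨A, rfl⟩
        exact h1 (f A) (hf1 A)
      have hmem : Cardinal.mk ↥(range f) ∈ cofset := ⟨range f, hbd, hcof', rfl⟩
      have h4 : B.cofBorn ≤ Cardinal.mk ↥(range f) := by
        rw [hcofBorn]
        exact csInf_le (OrderBot.bddBelow _) hmem
      exact absurd ((h4.trans Cardinal.mk_range_le)) (not_le.mpr hlt')
  exact absurd hlt (not_lt.mpr hge)
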